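/- arXiv:0806.3260 — 2 statements merged into one kernel-verified Lean document; each statement's English description precedes it below -/
import Mathlib

section
/- Let A be an n×n complex matrix, let r₀ ∈ ℂⁿ, let 1 ≤ m ≤ n−1, and let r be a GMRES(m) residual of A from r₀ with r ≠ 0. Let K = K(A, r₀) be the n×(m+1) Krylov matrix, and assume K has full column rank m+1 (equivalently, KᴴK is invertible). Then K (KᴴK)⁻¹ e₁ = (1/‖r‖²) r, where e₁ = (1,0,…,0)ᵀ ∈ ℂ^{m+1} is the first standard basis vector. (Equivalently, the first column of the conjugate transpose of the Moore–Penrose pseudoinverse K† = (KᴴK)⁻¹Kᴴ equals r/‖r‖².) -/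
open Polynomial Matrix
open scoped InnerProductSpace ComplexConjugate

/-- The Euclidean (ℓ²) norm of a vector in ℂⁿ. -/
noncomputable def l2enorm {n : ℕ} (v : Fin n → ℂ) : ℝ :=
  ‖(WithLp.equiv 2 (Fin n → ℂ)).symm v‖

/-- `s` is a GMRES(m) residual of `A` from `r`: there is a polynomial `p` of degree at most `m`
with `p 0 = 1` such that `s = p(A) r` and `‖s‖ ≤ ‖q(A) r‖` for all admissible `q`. -/
def IsGMRESResidual {n : ℕ} (m : ℕ) (A : Matrix (Fin n) (Fin n) ℂ)
    (r s : Fin n → ℂ) : Prop :=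
  ∃ p : ℂ[X], p.natDegree ≤ m ∧ p.eval 0 = 1 ∧ s = (aeval A p).mulVec r ∧
    ∀ q : ℂ[X], q.natDegree ≤ m → q.eval 0 = 1 →
      l2enorm s ≤ l2enorm ((aeval A q).mulVec r)

/-- The Krylov matrix `K(A, r) = [r, Ar, …, Aᵐ r]`, an `n × (m+1)` matrix. -/
noncomputable def krylov {n : ℕ} (m : ℕ) (A : Matrix (Fin n) (Fin n) ℂ) (r : Fin n → ℂ) :
    Matrix (Fin n) (Fin (m + 1)) ℂ :=
  Matrix.of fun i j => (A ^ (j : ℕ)).mulVec r i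

lemma inner_eq_zero_of_forall_norm_le' {E : Type*} [NormedAddCommGroup E]
    [InnerProductSpace ℂ E] (w r : E) (h : ∀ t : ℂ, ‖r‖ ≤ ‖r + t • w‖) :
    (inner ℂ w r : ℂ) = 0 := by
  by_contra hc
  set c : ℂ := inner ℂ w r with hc'
  set ε : ℝ := 1 / (‖w‖ ^ 2 + 1) with hε
  have hεpos : 0 < ε := by positivity
  have hle := h (-(ε : ℂ) * c)
  have hsq : ‖r‖ ^ 2 ≤ ‖r + (-(ε:ℂ) * c) • w‖ ^ 2 :=
    pow_le_pow_left₀ (norm_nonneg _) hle 2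
  rw [norm_add_sq (𝕜 := ℂ)] at hsq
  have h1 : (inner ℂ r ((-(ε:ℂ) * c) • w) : ℂ) = -(ε:ℂ) * (c * (starRingEnd ℂ) c) := by
    rw [inner_smul_right]
    have : (inner ℂ r w : ℂ) = (starRingEnd ℂ) c := by
      rw [hc', ← inner_conj_symm]
    rw [this]; ring
  rw [h1] at hsq
  have h2 : Complex.re (-(ε:ℂ) * (c * (starRingEnd ℂ) c)) = -ε * Complex.normSq c := by
    rw [Complex.mul_conj]; simp
  rw [RCLike.re_to_complex, h2] at hsq
  have h3 : ‖(-(ε:ℂ) * c) • w‖ ^ 2 = ε^2 * Complex.normSq c * ‖w‖^2 := by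
    rw [norm_smul, norm_mul, norm_neg, Complex.norm_real, Real.norm_eq_abs,
      abs_of_pos hεpos, ← Complex.sq_norm]
    ring
  rw [h3] at hsq
  have hcpos : 0 < Complex.normSq c := by
    simpa [Complex.normSq_pos] using hc
  have hεw : ε * (‖w‖^2 + 1) = 1 := by rw [hε, one_div, inv_mul_cancel₀ (by positivity)]
  nlinarith [sq_nonneg (‖w‖), hεpos, hcpos]

/-- The first column of `(K†)ᴴ`, i.e. `K (Kᴴ K)⁻¹ e₁`, equals `r / ‖r‖²` where `r` is the
GMRES(m) residual and `K = K(A, r₀)` is the Krylov matrix (assumed of full column rank). -/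
theorem krylov_pseudoinverse_first_column {n : ℕ} (m : ℕ) (hm : 1 ≤ m) (hmn : m ≤ n - 1)
    (A : Matrix (Fin n) (Fin n) ℂ) (r₀ r : Fin n → ℂ)
    (hres : IsGMRESResidual m A r₀ r) (hr : r ≠ 0)
    (hrank : IsUnit ((krylov m A r₀)ᴴ * krylov m A r₀)) :
    (krylov m A r₀ * ((krylov m A r₀)ᴴ * krylov m A r₀)⁻¹).mulVec
        (Pi.single 0 1) = ((l2enorm r : ℂ) ^ 2)⁻¹ • r := by
  obtain ⟨p, hpdeg, hp0, hpr, hmin⟩ := hres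
  set K := krylov m A r₀ with hK
  set c : Fin (m+1) → ℂ := fun j => p.coeff j with hc
  -- r = K c
  have hrc : r = K.mulVec c := by
    funext i
    rw [hpr, Polynomial.aeval_eq_sum_range' (lt_of_le_of_lt hpdeg (Nat.lt_succ_self m))]
    simp only [Matrix.mulVec, dotProduct, Finset.sum_apply, Matrix.sum_apply,
      Matrix.smul_apply, smul_eq_mul, Finset.sum_mul, hK, krylov, Matrix.of_apply, hc]
    rw [Finset.sum_comm, ← Fin.sum_univ_eq_sum_range (fun j => ∑ k, p.coeff j * (A ^ j) i k * r₀ k)]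
    refine Finset.sum_congr rfl fun j _ => ?_
    exact Finset.sum_congr rfl fun k _ => by ring
  -- orthogonality
  have horth : ∀ j : Fin (m+1), j ≠ 0 → ∑ i, conj (K i j) * r i = 0 := by
    intro j hj
    have hjv : (j:ℕ) ≠ 0 := fun h => hj (Fin.ext h)
    set w : Fin n → ℂ := fun i => (A ^ (j:ℕ)).mulVec r₀ i with hw
    have key : ∀ t : ℂ, l2enorm r ≤ l2enorm (r + t • w) := by
      intro t
      have hq := hmin (p + C t * X ^ (j:ℕ))
        (le_trans (Polynomial.natDegree_add_le _ _)
          (max_le hpdeg (le_trans (Polynomial.natDegree_C_mul_le _ _)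
            (by simpa using (Nat.lt_succ_iff.mp j.isLt)))))
        (by simp [hp0, zero_pow hjv])
      have heq : (aeval A (p + C t * X ^ (j:ℕ))).mulVec r₀ = r + t • w := by
        rw [map_add, Matrix.add_mulVec, ← hpr]
        congr 1
        rw [_root_.map_mul, aeval_C, aeval_X_pow]
        funext i
        simp [hw, Algebra.algebraMap_eq_smul_one, smul_mul_assoc,
          Matrix.smul_mulVec]
      rw [heq] at hq
      exact hq
    have hinner : (inner ℂ ((WithLp.equiv 2 (Fin n → ℂ)).symm w)
        ((WithLp.equiv 2 (Fin n → ℂ)).symm r) : ℂ) = 0 := by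
      apply inner_eq_zero_of_forall_norm_le'
      intro t
      have := key t
      simpa [l2enorm] using this
    simpa [PiLp.inner_apply, RCLike.inner_apply, hK, krylov, hw, mul_comm] using hinner
  -- Kᴴ r = ‖r‖² e₁
  have hnormsq : ((l2enorm r : ℂ))^2 = ∑ i, conj (r i) * r i := by
    have h1 : (inner ℂ ((WithLp.equiv 2 (Fin n → ℂ)).symm r)
        ((WithLp.equiv 2 (Fin n → ℂ)).symm r) : ℂ) = ((l2enorm r : ℂ))^2 := by
      rw [inner_self_eq_norm_sq_to_K]
      norm_cast
    rw [← h1]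
    simp [PiLp.inner_apply, RCLike.inner_apply, -inner_self_eq_norm_sq_to_K, mul_comm]
  have hb0 : ∑ i, conj (K i 0) * r i = ((l2enorm r : ℂ))^2 := by
    have hc0 : c 0 = 1 := by
      simp [hc, Polynomial.coeff_zero_eq_eval_zero, hp0]
    have hstep : ∑ j : Fin (m+1), conj (c j) * ∑ i, conj (K i j) * r i
        = ∑ i, conj (K i 0) * r i := by
      rw [Finset.sum_eq_single (0 : Fin (m+1))]
      · rw [hc0]; simp
      · intro j _ hj; rw [horth j hj]; ring
      · simp
    calc ∑ i, conj (K i 0) * r i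
        = ∑ j : Fin (m+1), conj (c j) * ∑ i, conj (K i j) * r i := hstep.symm
      _ = ∑ i, conj ((K.mulVec c) i) * r i := by
          simp only [Matrix.mulVec, dotProduct, map_sum, _root_.map_mul,
            Finset.sum_mul]
          rw [Finset.sum_comm]
          refine Finset.sum_congr rfl fun i _ => ?_
          rw [Finset.mul_sum]
          exact Finset.sum_congr rfl fun k _ => by ring
      _ = ∑ i, conj (r i) * r i := by rw [← hrc]
      _ = ((l2enorm r : ℂ))^2 := hnormsq.symm
  have hKHr : Kᴴ.mulVec r = ((l2enorm r : ℂ)^2) • (Pi.single 0 1 : Fin (m+1) → ℂ) := by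
    funext j
    by_cases hj : j = 0
    · subst hj
      simp only [Matrix.mulVec, dotProduct, Matrix.conjTranspose_apply, Pi.smul_apply,
        Pi.single_eq_same, smul_eq_mul, mul_one]
      simpa [RCLike.star_def] using hb0
    · simp only [Matrix.mulVec, dotProduct, Matrix.conjTranspose_apply, Pi.smul_apply,
        Pi.single_eq_of_ne hj, smul_eq_mul, mul_zero]
      simpa [RCLike.star_def] using horth j hj
  -- finish
  have hrne : ((l2enorm r : ℂ))^2 ≠ 0 := by
    have : l2enorm r ≠ 0 := by
      simp only [l2enorm, norm_ne_zero_iff]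
      intro h0
      apply hr
      have := congrArg (WithLp.equiv 2 (Fin n → ℂ)) h0
      simpa using this
    exact pow_ne_zero _ (Complex.ofReal_ne_zero.mpr this)
  have he1 : (Pi.single 0 1 : Fin (m+1) → ℂ) = (((l2enorm r : ℂ))^2)⁻¹ • Kᴴ.mulVec r := by
    rw [hKHr, smul_smul, inv_mul_cancel₀ hrne, one_smul]
  rw [he1, Matrix.mulVec_smul]
  congr 1
  have hdet : IsUnit ((Kᴴ * K).det) := (Matrix.isUnit_iff_isUnit_det _).mp hrank
  calc (K * (Kᴴ * K)⁻¹).mulVec (Kᴴ.mulVec r)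
      = (K * (Kᴴ * K)⁻¹).mulVec (Kᴴ.mulVec (K.mulVec c)) := by rw [← hrc]
    _ = (K * ((Kᴴ * K)⁻¹ * (Kᴴ * K))).mulVec c := by
        rw [Matrix.mulVec_mulVec, Matrix.mulVec_mulVec, Matrix.mul_assoc,
          Matrix.mul_assoc]
    _ = r := by rw [Matrix.nonsing_inv_mul _ hdet, Matrix.mul_one, ← hrc]
end

section
/- Let A be an n×n complex normal invertible matrix, let 1 ≤ m ≤ n−1, and let r₀ ∈ ℂⁿ be nonzero. If r_m is a GMRES(m) residual of A from r₀ and r̂_m is a GMRES(m) residual of Aᴴ from the same vector r₀, and both are nonzero, then ‖r_m‖ = ‖r̂_m‖. -/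
open Polynomial Matrix

/-- Two polynomial evaluations at commuting elements commute. -/
lemma commute_aeval_aeval {S : Type*} [Semiring S] [Algebra ℂ S] {a b : S}
    (h : Commute a b) (p q : ℂ[X]) : Commute (aeval a p) (aeval b q) := by
  have key : ∀ (x y : S), Commute x y → ∀ r : ℂ[X], Commute (aeval x r) y := by
    intro x y hxy r
    induction r using Polynomial.induction_on' with
    | add p q hp hq => simpa [map_add] using hp.add_left hq
    | monomial k c =>
      rw [aeval_monomial]
      exact Commute.mul_left (Algebra.commutes c y) (hxy.pow_left k)
  exact ((key b (aeval a p) ((key a b h p).symm) q).symm)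

/-- Evaluating the conjugated polynomial at `Aᴴ` gives the conjugate transpose of `p(A)`. -/
lemma aeval_conjT {n : ℕ} (A : Matrix (Fin n) (Fin n) ℂ) (p : ℂ[X]) :
    aeval Aᴴ (p.map (starRingEnd ℂ)) = (aeval A p)ᴴ := by
  induction p using Polynomial.induction_on' with
  | add p q hp hq => simp [Polynomial.map_add, hp, hq]
  | monomial k c =>
    rw [Polynomial.map_monomial, aeval_monomial, aeval_monomial, conjTranspose_mul,
      conjTranspose_pow]
    simp [Algebra.algebraMap_eq_smul_one, Matrix.conjTranspose_smul, smul_mul_assoc,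
      mul_smul_comm, Complex.star_def]

lemma enorm_eq_sqrt {n : ℕ} (w : Fin n → ℂ) : l2enorm w = Real.sqrt (star w ⬝ᵥ w).re := by
  rw [l2enorm, EuclideanSpace.norm_eq]
  congr 1
  rw [dotProduct, Complex.re_sum]
  refine Finset.sum_congr rfl fun i _ => ?_
  simp only [WithLp.equiv_symm_apply, PiLp.toLp_apply, Pi.star_apply, Complex.star_def]
  rw [mul_comm, Complex.mul_conj]
  simp [Complex.normSq_eq_norm_sq, ← Complex.ofReal_pow]

/-- For a normal matrix `M`, `‖M v‖ = ‖Mᴴ v‖`. -/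
lemma enorm_mulVec_conjTranspose {n : ℕ} (M : Matrix (Fin n) (Fin n) ℂ)
    (hM : M * Mᴴ = Mᴴ * M) (v : Fin n → ℂ) :
    l2enorm (M.mulVec v) = l2enorm (Mᴴ.mulVec v) := by
  rw [enorm_eq_sqrt, enorm_eq_sqrt]
  congr 2
  rw [star_mulVec, star_mulVec, conjTranspose_conjTranspose,
    Matrix.dotProduct_mulVec, Matrix.dotProduct_mulVec,
    Matrix.vecMul_vecMul, Matrix.vecMul_vecMul, hM]

lemma map_conj_map_conj (p : ℂ[X]) :
    (p.map (starRingEnd ℂ)).map (starRingEnd ℂ) = p := by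
  rw [Polynomial.map_map]
  simp

/-- For normal `A`, `‖q(A) r‖ = ‖q̄(Aᴴ) r‖`. -/
lemma key_enorm {n : ℕ} (A : Matrix (Fin n) (Fin n) ℂ) (hnormal : A * Aᴴ = Aᴴ * A)
    (r : Fin n → ℂ) (q : ℂ[X]) :
    l2enorm ((aeval A q).mulVec r) = l2enorm ((aeval Aᴴ (q.map (starRingEnd ℂ))).mulVec r) := by
  have hMH := aeval_conjT A q
  have hc : (aeval A q) * (aeval A q)ᴴ = (aeval A q)ᴴ * (aeval A q) := by
    rw [← hMH]
    exact (commute_aeval_aeval hnormal q (q.map (starRingEnd ℂ))).eq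
  rw [enorm_mulVec_conjTranspose _ hc, hMH]

/-- For a normal invertible matrix `A`, GMRES(m) applied to `A` and to `Aᴴ` from the same
initial residual `r₀` produces residual vectors of equal norm. -/
theorem norm_gmres_residual_eq_norm_gmres_residual_conjTranspose {n : ℕ} (m : ℕ)
    (hm : 1 ≤ m) (hmn : m ≤ n - 1)
    (A : Matrix (Fin n) (Fin n) ℂ) (hnormal : A * Aᴴ = Aᴴ * A) (hA : IsUnit A)
    (r₀ rm rhatm : Fin n → ℂ) (hr₀ : r₀ ≠ 0)
    (h1 : IsGMRESResidual m A r₀ rm) (h2 : IsGMRESResidual m Aᴴ r₀ rhatm)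
    (hrm : rm ≠ 0) (hrhatm : rhatm ≠ 0) :
    l2enorm rm = l2enorm rhatm := by
  obtain ⟨p, hpd, hp0, hps, hpmin⟩ := h1
  obtain ⟨q, hqd, hq0, hqs, hqmin⟩ := h2
  have hdeg : ∀ r : ℂ[X], r.natDegree ≤ m → (r.map (starRingEnd ℂ)).natDegree ≤ m :=
    fun r hr => le_trans Polynomial.natDegree_map_le hr
  have hev : ∀ r : ℂ[X], r.eval 0 = 1 → (r.map (starRingEnd ℂ)).eval 0 = 1 := by
    intro r hr
    rw [Polynomial.eval_map, Polynomial.eval₂_at_zero, ← Polynomial.coeff_zero_eq_eval_zero] at *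
    rw [hr]; simp
  have hAH : (Aᴴ)ᴴ = A := conjTranspose_conjTranspose A
  apply le_antisymm
  · calc l2enorm rm ≤ l2enorm ((aeval A (q.map (starRingEnd ℂ))).mulVec r₀) :=
          hpmin _ (hdeg q hqd) (hev q hq0)
      _ = l2enorm ((aeval Aᴴ ((q.map (starRingEnd ℂ)).map (starRingEnd ℂ))).mulVec r₀) :=
          key_enorm A hnormal r₀ _
      _ = l2enorm rhatm := by rw [map_conj_map_conj, hqs]
  · calc l2enorm rhatm ≤ l2enorm ((aeval Aᴴ (p.map (starRingEnd ℂ))).mulVec r₀) :=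
          hqmin _ (hdeg p hpd) (hev p hp0)
      _ = l2enorm ((aeval (Aᴴ)ᴴ ((p.map (starRingEnd ℂ)).map (starRingEnd ℂ))).mulVec r₀) :=
          key_enorm Aᴴ (by rw [hAH, hnormal]) r₀ _
      _ = l2enorm rm := by rw [map_conj_map_conj, hAH, hps]
end
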